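/- Let φ : [0,∞) → [0,∞) be a homeomorphism with φ(t) ≥ t for all t, and suppose a homeomorphism f : D → D' between proper domains in Banach spaces satisfies, for points x, y ∈ D with k_D(x,y) ≤ t₀ where φ(t₀) ≤ log(3/2): j_{D'}(f(x), f(y)) ≤ φ(j_D(x,y)). Then |f(x) - f(y)| ≤ (1/2)·dist(f(x), ∂D') and consequently k_{D'}(f(x), f(y)) ≤ 2·log(1 + |f(x)-f(y)|/dist(f(x), ∂D')) ≤ 2·φ(k_D(x,y)). -/

import Mathlib

open Metric Set

variable {E : Type*} [NormedAddCommGroup E] [NormedSpace ℝ E]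

/-- The quasihyperbolic length of a curve `γ : [0, L] → D` parametrized by
arc length (1-Lipschitz), in the domain `D`: `∫₀^L dt / dist(γ t, Dᶜ)`. -/
noncomputable def qhLength (D : Set E) (γ : ℝ → E) (L : ℝ) : ℝ :=
  ∫ t in (0:ℝ)..L, 1 / infDist (γ t) Dᶜ

/-- `γ : [0, L] → D` is an admissible (rectifiable, arc-length parametrized)
curve joining `x` to `y` in `D`. -/
def IsQHPath (D : Set E) (x y : E) (γ : ℝ → E) (L : ℝ) : Prop :=
  0 ≤ L ∧ LipschitzOnWith 1 γ (Icc 0 L) ∧ γ 0 = x ∧ γ L = y ∧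
    ∀ t ∈ Icc 0 L, γ t ∈ D

/-- The quasihyperbolic distance in the domain `D`: the infimum of
quasihyperbolic lengths of rectifiable curves joining `x` and `y` in `D`. -/
noncomputable def qhDist (D : Set E) (x y : E) : ℝ :=
  ⨅ p : {p : (ℝ → E) × ℝ // IsQHPath D x y p.1 p.2}, qhLength D p.1.1 p.1.2

/-- The `j`-metric of the domain `D`. -/
noncomputable def jDist (D : Set E) (x y : E) : ℝ :=
  Real.log (1 + ‖x - y‖ / min (infDist x Dᶜ) (infDist y Dᶜ))

set_option linter.unusedSectionVars false in
lemma aux_infDist_pos {D : Set E} (hD : IsOpen D) (hne : D ≠ univ) {z : E} (hz : z ∈ D) :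
    0 < infDist z Dᶜ :=
  (hD.isClosed_compl.notMem_iff_infDist_pos (nonempty_compl.2 hne)).1 (by simpa)

set_option linter.unusedSectionVars false in
lemma aux_qhLength_nonneg (D : Set E) (γ : ℝ → E) {L : ℝ} (hL : 0 ≤ L) :
    0 ≤ qhLength D γ L :=
  intervalIntegral.integral_nonneg hL fun _ _ => div_nonneg zero_le_one infDist_nonneg

set_option linter.unusedSectionVars false in
lemma aux_qhDist_le {D : Set E} {x y : E} {γ : ℝ → E} {L : ℝ} (h : IsQHPath D x y γ L) :
    qhDist D x y ≤ qhLength D γ L := by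
  have hb : BddBelow (Set.range fun p : {p : (ℝ → E) × ℝ // IsQHPath D x y p.1 p.2} =>
      qhLength D p.1.1 p.1.2) := by
    refine ⟨0, ?_⟩
    rintro v ⟨⟨p, hp⟩, rfl⟩
    exact aux_qhLength_nonneg D p.1 hp.1
  exact ciInf_le hb ⟨(γ, L), h⟩

set_option linter.unusedSectionVars false in
lemma aux_lip_dist {γ : ℝ → E} {L : ℝ} (hlip : LipschitzOnWith 1 γ (Icc 0 L)) :
    ∀ a ∈ Icc (0:ℝ) L, ∀ b ∈ Icc (0:ℝ) L, dist (γ a) (γ b) ≤ |a - b| := by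
  intro a ha b hb
  have := lipschitzOnWith_iff_dist_le_mul.1 hlip a ha b hb
  simpa [Real.dist_eq] using this

set_option linter.unusedSectionVars false in
lemma aux_const_path {D : Set E} {x : E} (hx : x ∈ D) :
    IsQHPath D x x (fun _ => x) 0 := by
  refine ⟨le_refl 0, ?_, rfl, rfl, fun t _ => hx⟩
  rw [lipschitzOnWith_iff_dist_le_mul]
  intro s _ t _
  simp [dist_nonneg]

lemma aux_concat_seg {D : Set E} {x z w : E} {γ : ℝ → E} {L : ℝ}
    (h : IsQHPath D x z γ L)
    (hseg : ∀ c ∈ Icc (0:ℝ) 1, z + c • (w - z) ∈ D) :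
    IsQHPath D x w
      (fun t => if t ≤ L then γ t else z + (((t - L) / ‖w - z‖) • (w - z)))
      (L + ‖w - z‖) := by
  obtain ⟨hL, hlip, h0, hzL, hmem⟩ := h
  set r := ‖w - z‖ with hr
  have hr0 : 0 ≤ r := norm_nonneg _
  set γ₂ : ℝ → E := fun t => z + (t / r) • (w - z) with hγ₂def
  have hγ₂lip : ∀ a b : ℝ, ‖γ₂ a - γ₂ b‖ ≤ |a - b| := by
    intro a b
    have heq : γ₂ a - γ₂ b = ((a - b) / r) • (w - z) := by
      simp only [hγ₂def]
      rw [add_sub_add_left_eq_sub, ← sub_smul, ← sub_div]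
    rw [heq, norm_smul, Real.norm_eq_abs, ← hr]
    rcases eq_or_lt_of_le hr0 with h0r | h0r
    · rw [← h0r, mul_zero]; exact abs_nonneg _
    · rw [abs_div, abs_of_pos h0r, div_mul_cancel₀ _ h0r.ne']
  have hlipd := aux_lip_dist hlip
  have hzz : γ₂ 0 = z := by simp [hγ₂def]
  have key : ∀ s ∈ Icc 0 (L + r), ∀ t ∈ Icc 0 (L + r), s ≤ t →
      dist (if s ≤ L then γ s else γ₂ (s - L)) (if t ≤ L then γ t else γ₂ (t - L))
        ≤ t - s := by
    rintro s ⟨hs0, hs1⟩ t ⟨ht0, ht1⟩ hst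
    by_cases ht : t ≤ L
    · have hsL : s ≤ L := hst.trans ht
      rw [if_pos hsL, if_pos ht]
      calc dist (γ s) (γ t) ≤ |s - t| := hlipd s ⟨hs0, hsL⟩ t ⟨ht0, ht⟩
        _ = t - s := by rw [abs_sub_comm, abs_of_nonneg (by linarith)]
    · push_neg at ht
      by_cases hs : s ≤ L
      · rw [if_pos hs, if_neg (not_le.2 ht)]
        calc dist (γ s) (γ₂ (t - L))
            ≤ dist (γ s) (γ L) + dist (γ L) (γ₂ (t - L)) := dist_triangle _ _ _
          _ ≤ (L - s) + (t - L) := by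
              refine add_le_add ?_ ?_
              · calc dist (γ s) (γ L) ≤ |s - L| := hlipd s ⟨hs0, hs⟩ L ⟨hL, le_refl L⟩
                  _ = L - s := by rw [abs_sub_comm, abs_of_nonneg (by linarith)]
              · rw [hzL, ← hzz, dist_eq_norm]
                calc ‖γ₂ 0 - γ₂ (t - L)‖ ≤ |0 - (t - L)| := hγ₂lip 0 (t - L)
                  _ = t - L := by rw [zero_sub, abs_neg, abs_of_nonneg (by linarith)]
          _ = t - s := by ring
      · push_neg at hs
        rw [if_neg (not_le.2 hs), if_neg (not_le.2 ht), dist_eq_norm]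
        calc ‖γ₂ (s - L) - γ₂ (t - L)‖ ≤ |s - L - (t - L)| := hγ₂lip _ _
          _ = t - s := by rw [show s - L - (t - L) = s - t by ring,
              abs_sub_comm, abs_of_nonneg (by linarith)]
  refine ⟨by linarith, ?_, ?_, ?_, ?_⟩
  · rw [lipschitzOnWith_iff_dist_le_mul]
    intro s hs t ht
    have h1 : ((1 : NNReal) : ℝ) * dist s t = |s - t| := by
      rw [NNReal.coe_one, one_mul, Real.dist_eq]
    rw [h1]
    rcases le_total s t with hst | hst
    · calc dist _ _ ≤ t - s := key s hs t ht hst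
        _ ≤ |s - t| := by rw [abs_sub_comm]; exact le_abs_self _
    · rw [dist_comm]
      calc dist _ _ ≤ s - t := key t ht s hs hst
        _ ≤ |s - t| := le_abs_self _
  · simpa only [if_pos hL] using h0
  · show (if L + r ≤ L then γ (L + r) else z + (((L + r - L) / r) • (w - z))) = w
    rcases eq_or_lt_of_le hr0 with h0r | h0r
    · have hwz : w = z := by
        have hh : ‖w - z‖ = 0 := h0r.symm
        rw [norm_eq_zero, sub_eq_zero] at hh; exact hh
      rw [← h0r, add_zero, if_pos (le_refl L), hzL, hwz]
    · rw [if_neg (by push_neg; linarith), add_sub_cancel_left, div_self h0r.ne', one_smul]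
      abel
  · rintro t ⟨ht0, ht1⟩
    show (if t ≤ L then γ t else z + (((t - L) / r) • (w - z))) ∈ D
    by_cases ht : t ≤ L
    · rw [if_pos ht]; exact hmem t ⟨ht0, ht⟩
    · push_neg at ht
      rw [if_neg (not_le.2 ht)]
      apply hseg
      rcases eq_or_lt_of_le hr0 with h0r | h0r
      · rw [← h0r, div_zero]; exact ⟨le_refl 0, zero_le_one⟩
      · exact ⟨div_nonneg (by linarith) hr0, (div_le_one h0r).2 (by linarith)⟩

lemma aux_exists_path {D : Set E} (hD : IsOpen D) (hconn : IsPreconnected D)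
    {x y : E} (hx : x ∈ D) (hy : y ∈ D) : ∃ γ L, IsQHPath D x y γ L := by
  set S : Set E := {z | ∃ γ L, IsQHPath D x z γ L} with hS
  have hext : ∀ z δ, ball z δ ⊆ D → z ∈ S → ∀ w ∈ ball z δ, w ∈ S := by
    rintro z δ hball ⟨γ, L, hp⟩ w hw
    refine ⟨_, _, aux_concat_seg hp ?_⟩
    rintro c ⟨hc0, hc1⟩
    apply hball
    rw [mem_ball, dist_eq_norm, add_sub_cancel_left, norm_smul, Real.norm_eq_abs,
      abs_of_nonneg hc0]
    calc c * ‖w - z‖ ≤ 1 * ‖w - z‖ :=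
          mul_le_mul_of_nonneg_right hc1 (norm_nonneg _)
      _ = ‖w - z‖ := one_mul _
      _ < δ := by rwa [mem_ball, dist_eq_norm] at hw
  by_contra hy'
  have hyS : y ∉ S := fun h => hy' (by obtain ⟨γ, L, hp⟩ := h; exact ⟨γ, L, hp⟩)
  set U : Set E := D ∩ S with hU
  set V : Set E := D \ S with hV
  have hUopen : IsOpen U := by
    rw [isOpen_iff]
    rintro z ⟨hzD, hzS⟩
    obtain ⟨δ, hδ, hball⟩ := isOpen_iff.1 hD z hzD
    exact ⟨δ, hδ, fun w hw => ⟨hball hw, hext z δ hball hzS w hw⟩⟩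
  have hVopen : IsOpen V := by
    rw [isOpen_iff]
    rintro z ⟨hzD, hzS⟩
    obtain ⟨δ, hδ, hball⟩ := isOpen_iff.1 hD z hzD
    refine ⟨δ/2, by linarith, fun w hw => ⟨hball (ball_subset_ball (by linarith) hw), ?_⟩⟩
    intro hwS
    refine hzS (hext w (δ/2) ?_ hwS z ?_)
    · intro u hu
      apply hball
      rw [mem_ball] at hu hw ⊢
      calc dist u z ≤ dist u w + dist w z := dist_triangle _ _ _
        _ < δ/2 + δ/2 := add_lt_add hu hw
        _ = δ := by ring
    · rw [mem_ball, dist_comm]; rwa [mem_ball] at hw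
  have hsub : D ⊆ U ∪ V := by
    intro z hz
    by_cases h : z ∈ S
    · exact Or.inl ⟨hz, h⟩
    · exact Or.inr ⟨hz, h⟩
  have hxU : (D ∩ U).Nonempty := ⟨x, hx, hx, (fun _ => x), 0, aux_const_path hx⟩
  have hyV : (D ∩ V).Nonempty := ⟨y, hy, hy, hyS⟩
  obtain ⟨z, _, ⟨_, hzS⟩, ⟨_, hzS'⟩⟩ := hconn U V hUopen hVopen hsub hxU hyV
  exact hzS' hzS

set_option linter.unusedSectionVars false in
lemma aux_reverse {D : Set E} {x y : E} {γ : ℝ → E} {L : ℝ} (h : IsQHPath D x y γ L) :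
    IsQHPath D y x (fun t => γ (L - t)) L := by
  obtain ⟨hL, hlip, h0, hL', hmem⟩ := h
  have hmap : ∀ t ∈ Icc (0:ℝ) L, L - t ∈ Icc (0:ℝ) L := by
    rintro t ⟨ht0, ht1⟩; exact ⟨by linarith, by linarith⟩
  refine ⟨hL, ?_, by simpa [sub_zero] using hL', by simpa using h0,
    fun t ht => hmem _ (hmap t ht)⟩
  rw [lipschitzOnWith_iff_dist_le_mul]
  intro s hs t ht
  calc dist (γ (L - s)) (γ (L - t)) ≤ |(L - s) - (L - t)| :=
        aux_lip_dist hlip _ (hmap s hs) _ (hmap t ht)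
    _ = ((1 : NNReal) : ℝ) * dist s t := by
        rw [NNReal.coe_one, one_mul, Real.dist_eq, show L - s - (L - t) = t - s by ring,
          abs_sub_comm]

set_option linter.unusedSectionVars false in
lemma aux_qhLength_reverse (D : Set E) (γ : ℝ → E) (L : ℝ) :
    qhLength D (fun t => γ (L - t)) L = qhLength D γ L := by
  unfold qhLength
  rw [intervalIntegral.integral_comp_sub_left (fun t => 1 / infDist (γ t) Dᶜ) L]
  norm_num

set_option linter.unusedSectionVars false in
lemma aux_log_le_qhLength {D : Set E} (hD : IsOpen D) (hne : D ≠ univ)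
    {x y : E} {γ : ℝ → E} {L : ℝ} (h : IsQHPath D x y γ L) :
    Real.log (1 + L / infDist x Dᶜ) ≤ qhLength D γ L := by
  obtain ⟨hL, hlip, h0, hL', hmem⟩ := h
  set d := infDist x Dᶜ with hd
  have hd0 : 0 < d := aux_infDist_pos hD hne (h0 ▸ hmem 0 ⟨le_refl 0, hL⟩)
  have hub : ∀ t ∈ Icc (0:ℝ) L, infDist (γ t) Dᶜ ≤ d + t := by
    rintro t ht
    have hdist : dist (γ t) x ≤ t := by
      rw [← h0]
      calc dist (γ t) (γ 0) ≤ |t - 0| := aux_lip_dist hlip t ht 0 ⟨le_refl 0, hL⟩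
        _ = t := by rw [sub_zero, abs_of_nonneg ht.1]
    calc infDist (γ t) Dᶜ ≤ infDist x Dᶜ + dist (γ t) x := infDist_le_infDist_add_dist
      _ ≤ d + t := add_le_add (le_of_eq hd.symm) hdist
  have hpos : ∀ t ∈ Icc (0:ℝ) L, 0 < infDist (γ t) Dᶜ := fun t ht =>
    aux_infDist_pos hD hne (hmem t ht)
  have hcontγ : ContinuousOn γ (Icc 0 L) := hlip.continuousOn
  have hcont2 : ContinuousOn (fun t => 1 / infDist (γ t) Dᶜ) (Icc 0 L) := by
    refine ContinuousOn.div continuousOn_const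
      ((continuous_infDist_pt _).comp_continuousOn hcontγ) ?_
    intro t ht; exact (hpos t ht).ne'
  have hint2 : IntervalIntegrable (fun t => 1 / infDist (γ t) Dᶜ) MeasureTheory.volume 0 L :=
    (hcont2.mono (by rw [uIcc_of_le hL])).intervalIntegrable
  have hcont1 : ContinuousOn (fun t : ℝ => (d + t)⁻¹) (Icc 0 L) := by
    refine ContinuousOn.inv₀ (by fun_prop) ?_
    rintro t ⟨ht0, _⟩; positivity
  have hint1 : IntervalIntegrable (fun t : ℝ => (d + t)⁻¹) MeasureTheory.volume 0 L :=
    (hcont1.mono (by rw [uIcc_of_le hL])).intervalIntegrable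
  have hmono : (∫ t in (0:ℝ)..L, (d + t)⁻¹) ≤ qhLength D γ L := by
    unfold qhLength
    refine intervalIntegral.integral_mono_on hL hint1 hint2 ?_
    intro t ht
    rw [one_div]
    exact inv_anti₀ (hpos t ht) (hub t ht)
  refine le_trans (le_of_eq ?_) hmono
  rw [intervalIntegral.integral_comp_add_left (fun u : ℝ => u⁻¹) d, add_zero,
    integral_inv (by rw [Set.mem_uIcc]; push_neg; constructor <;> intro <;> linarith)]
  congr 1
  field_simp

set_option linter.unusedSectionVars false in
lemma aux_jDist_nonneg (D : Set E) (x y : E) : 0 ≤ jDist D x y := by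
  refine Real.log_nonneg ?_
  have h1 : 0 ≤ ‖x - y‖ / min (infDist x Dᶜ) (infDist y Dᶜ) :=
    div_nonneg (norm_nonneg _) (le_min infDist_nonneg infDist_nonneg)
  linarith

lemma aux_jDist_le_qhDist {D : Set E} (hD : IsOpen D) (hconn : IsPreconnected D)
    (hne : D ≠ univ) {x y : E} (hx : x ∈ D) (hy : y ∈ D) :
    jDist D x y ≤ qhDist D x y := by
  obtain ⟨γ₀, L₀, hp₀⟩ := aux_exists_path hD hconn hx hy
  have : Nonempty {p : (ℝ → E) × ℝ // IsQHPath D x y p.1 p.2} := ⟨⟨(γ₀, L₀), hp₀⟩⟩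
  refine le_ciInf ?_
  rintro ⟨⟨γ, L⟩, hp⟩
  have hdx : 0 < infDist x Dᶜ := aux_infDist_pos hD hne hx
  have hdy : 0 < infDist y Dᶜ := aux_infDist_pos hD hne hy
  have hm : 0 < min (infDist x Dᶜ) (infDist y Dᶜ) := lt_min hdx hdy
  have hxyL : ‖x - y‖ ≤ L := by
    have := aux_lip_dist hp.2.1 0 ⟨le_refl 0, hp.1⟩ L ⟨hp.1, le_refl L⟩
    rw [hp.2.2.1, hp.2.2.2.1, dist_eq_norm] at this
    calc ‖x - y‖ ≤ |0 - L| := this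
      _ = L := by rw [zero_sub, abs_neg, abs_of_nonneg hp.1]
  have hkey : ∀ e : ℝ, 0 < e → e = infDist x Dᶜ ∨ e = infDist y Dᶜ →
      Real.log (1 + L / e) ≤ qhLength D γ L := by
    rintro e he (rfl | rfl)
    · exact aux_log_le_qhLength hD hne hp
    · have := aux_log_le_qhLength hD hne (aux_reverse hp)
      rwa [aux_qhLength_reverse] at this
  have hmin : Real.log (1 + L / min (infDist x Dᶜ) (infDist y Dᶜ)) ≤ qhLength D γ L := by
    rcases min_cases (infDist x Dᶜ) (infDist y Dᶜ) with ⟨hmeq, _⟩ | ⟨hmeq, _⟩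
    · rw [hmeq]; exact hkey _ hdx (Or.inl rfl)
    · rw [hmeq]; exact hkey _ hdy (Or.inr rfl)
  refine le_trans ?_ hmin
  unfold jDist
  have h01 : (0:ℝ) < 1 + ‖x - y‖ / min (infDist x Dᶜ) (infDist y Dᶜ) := by
    have hnn : 0 ≤ ‖x - y‖ / min (infDist x Dᶜ) (infDist y Dᶜ) :=
      div_nonneg (norm_nonneg _) hm.le
    linarith
  exact Real.log_le_log h01 (add_le_add_right ((div_le_div_iff_of_pos_right hm).2 hxyL) 1)

set_option linter.unusedSectionVars false in
lemma aux_qhLength_le {D : Set E} {x y : E} {γ : ℝ → E} {L : ℝ}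
    (h : IsQHPath D x y γ L) (hLd : L < infDist x Dᶜ) :
    qhLength D γ L ≤ Real.log (infDist x Dᶜ / (infDist x Dᶜ - L)) := by
  obtain ⟨hL, hlip, h0, hL', hmem⟩ := h
  set d := infDist x Dᶜ with hd
  have hd0 : 0 < d := lt_of_le_of_lt hL hLd
  have hlb : ∀ t ∈ Icc (0:ℝ) L, d - t ≤ infDist (γ t) Dᶜ := by
    rintro t ht
    have hdist : dist x (γ t) ≤ t := by
      rw [dist_comm, ← h0]
      calc dist (γ t) (γ 0) ≤ |t - 0| := aux_lip_dist hlip t ht 0 ⟨le_refl 0, hL⟩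
        _ = t := by rw [sub_zero, abs_of_nonneg ht.1]
    have h1 : infDist x Dᶜ ≤ infDist (γ t) Dᶜ + dist x (γ t) := infDist_le_infDist_add_dist
    have h2 : d ≤ infDist (γ t) Dᶜ + t := by
      rw [hd]; exact h1.trans (add_le_add_right hdist _)
    linarith
  have hpos : ∀ t ∈ Icc (0:ℝ) L, 0 < infDist (γ t) Dᶜ := by
    rintro t ht
    have := hlb t ht
    have : d - t > 0 := by rcases ht with ⟨_, ht1⟩; linarith
    linarith [hlb t ht]
  have hcontγ : ContinuousOn γ (Icc 0 L) := hlip.continuousOn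
  have hcont2 : ContinuousOn (fun t => 1 / infDist (γ t) Dᶜ) (Icc 0 L) := by
    refine ContinuousOn.div continuousOn_const
      ((continuous_infDist_pt _).comp_continuousOn hcontγ) ?_
    intro t ht; exact (hpos t ht).ne'
  have hint2 : IntervalIntegrable (fun t => 1 / infDist (γ t) Dᶜ) MeasureTheory.volume 0 L :=
    (hcont2.mono (by rw [uIcc_of_le hL])).intervalIntegrable
  have hcont1 : ContinuousOn (fun t : ℝ => (d - t)⁻¹) (Icc 0 L) := by
    refine ContinuousOn.inv₀ (by fun_prop) ?_
    rintro t ⟨_, ht1⟩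
    have : 0 < d - t := by linarith
    exact this.ne'
  have hint1 : IntervalIntegrable (fun t : ℝ => (d - t)⁻¹) MeasureTheory.volume 0 L :=
    (hcont1.mono (by rw [uIcc_of_le hL])).intervalIntegrable
  have hmono : qhLength D γ L ≤ ∫ t in (0:ℝ)..L, (d - t)⁻¹ := by
    unfold qhLength
    refine intervalIntegral.integral_mono_on hL hint2 hint1 ?_
    intro t ht
    rw [one_div]
    refine inv_anti₀ ?_ (hlb t ht)
    rcases ht with ⟨_, ht1⟩; linarith
  refine hmono.trans (le_of_eq ?_)
  rw [intervalIntegral.integral_comp_sub_left (fun u : ℝ => u⁻¹) d, sub_zero,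
    integral_inv (by rw [Set.mem_uIcc]; push_neg; constructor <;> intro <;> linarith)]

theorem stmt_18 {E' : Type*} [NormedAddCommGroup E'] [NormedSpace ℝ E']
    [CompleteSpace E] [CompleteSpace E']
    (D : Set E) (D' : Set E') (hD : IsOpen D) (hconn : IsConnected D)
    (hne : D ≠ univ) (hD' : IsOpen D') (hconn' : IsConnected D')
    (hne' : D' ≠ univ) (f : E → E') (hmaps : MapsTo f D D')
    (φ : ℝ → ℝ) (hφmono : StrictMonoOn φ (Ici 0))
    (hφcont : ContinuousOn φ (Ici 0)) (hφ0 : φ 0 = 0)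
    (hφge : ∀ t, 0 ≤ t → t ≤ φ t)
    (t₀ : ℝ) (ht₀ : 0 ≤ t₀) (hφt₀ : φ t₀ ≤ Real.log (3 / 2))
    (x y : E) (hx : x ∈ D) (hy : y ∈ D) (hk : qhDist D x y ≤ t₀)
    (hj : jDist D' (f x) (f y) ≤ φ (jDist D x y)) :
    ‖f x - f y‖ ≤ (1 / 2) * infDist (f x) D'ᶜ ∧
    qhDist D' (f x) (f y) ≤
      2 * Real.log (1 + ‖f x - f y‖ / infDist (f x) D'ᶜ) ∧
    2 * Real.log (1 + ‖f x - f y‖ / infDist (f x) D'ᶜ) ≤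
      2 * φ (qhDist D x y) := by
  have hfx : f x ∈ D' := hmaps hx
  have hfy : f y ∈ D' := hmaps hy
  set r := ‖f x - f y‖ with hrdef
  set d := infDist (f x) D'ᶜ with hddef
  set dy := infDist (f y) D'ᶜ with hdydef
  have hr0 : 0 ≤ r := norm_nonneg _
  have hd0 : 0 < d := aux_infDist_pos hD' hne' hfx
  have hdy0 : 0 < dy := aux_infDist_pos hD' hne' hfy
  have hm0 : 0 < min d dy := lt_min hd0 hdy0
  have hjk : jDist D x y ≤ qhDist D x y :=
    aux_jDist_le_qhDist hD hconn.isPreconnected hne hx hy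
  have hj0 : 0 ≤ jDist D x y := aux_jDist_nonneg D x y
  have hq0 : 0 ≤ qhDist D x y := hj0.trans hjk
  have hmonoOn : MonotoneOn φ (Ici 0) := hφmono.monotoneOn
  -- Step 1 : jDist D' (f x) (f y) ≤ log (3/2)
  have h1 : jDist D' (f x) (f y) ≤ Real.log (3/2) := by
    refine hj.trans (le_trans ?_ hφt₀)
    exact hmonoOn hj0 ht₀ (hjk.trans hk)
  have hrm0 : 0 ≤ r / min d dy := div_nonneg hr0 hm0.le
  have h1' : 1 + r / min d dy ≤ 3/2 := by
    have := (Real.log_le_log_iff (by linarith) (by norm_num)).1 h1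
    exact this
  have hrm : r ≤ (1/2) * min d dy := by
    have h2 : r / min d dy ≤ 1/2 := by linarith
    calc r = (r / min d dy) * min d dy := by field_simp
      _ ≤ (1/2) * min d dy := mul_le_mul_of_nonneg_right h2 hm0.le
  have part1 : r ≤ (1/2) * d := by
    have hmin_le : min d dy ≤ d := min_le_left _ _
    nlinarith
  have hrd : r < d := by linarith
  -- Step 2 : segment from f x to f y lies in D'
  have hseg : ∀ c ∈ Icc (0:ℝ) 1, f x + c • (f y - f x) ∈ D' := by
    rintro c ⟨hc0, hc1⟩
    set p := f x + c • (f y - f x) with hp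
    have hdist : dist (f x) p ≤ r := by
      rw [dist_comm, dist_eq_norm, hp, add_sub_cancel_left, norm_smul, Real.norm_eq_abs,
        abs_of_nonneg hc0]
      calc c * ‖f y - f x‖ ≤ 1 * ‖f y - f x‖ :=
            mul_le_mul_of_nonneg_right hc1 (norm_nonneg _)
        _ = r := by rw [one_mul, norm_sub_rev]
    have hle : d ≤ infDist p D'ᶜ + r := by
      calc d ≤ infDist p D'ᶜ + dist (f x) p := infDist_le_infDist_add_dist
        _ ≤ infDist p D'ᶜ + r := add_le_add_right hdist _
    have hppos : 0 < infDist p D'ᶜ := by linarith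
    by_contra hpD
    have : p ∈ D'ᶜ := hpD
    rw [infDist_zero_of_mem this] at hppos
    exact lt_irrefl 0 hppos
  have hpath := aux_concat_seg (aux_const_path hfx) hseg
  have hlen : (0:ℝ) + ‖f y - f x‖ = r := by rw [zero_add, norm_sub_rev]
  rw [hlen] at hpath
  -- Step 3 : quasihyperbolic upper bound along the segment
  have hqle : qhDist D' (f x) (f y) ≤ Real.log (d / (d - r)) := by
    refine (aux_qhDist_le hpath).trans ?_
    have := aux_qhLength_le hpath (by rw [← hddef]; exact hrd)
    rwa [← hddef] at this
  -- Step 4 : log (d/(d-r)) ≤ 2 log (1 + r/d)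
  have hlog2 : Real.log (d / (d - r)) ≤ 2 * Real.log (1 + r / d) := by
    have hsq : 2 * Real.log (1 + r / d) = Real.log ((1 + r / d)^2) := by
      rw [Real.log_pow]; push_cast; ring
    rw [hsq]
    have heq : 1 + r / d = (d + r) / d := by field_simp
    refine Real.log_le_log (div_pos hd0 (by linarith)) ?_
    rw [heq, div_pow, div_le_div_iff₀ (by linarith) (by positivity)]
    nlinarith [sq_nonneg (d - 2*r), sq_nonneg r, mul_nonneg hr0 (mul_nonneg hr0 hr0)]
  -- Step 5 : log (1 + r/d) ≤ φ (qhDist D x y)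
  have h5 : Real.log (1 + r / d) ≤ φ (qhDist D x y) := by
    have hstep : Real.log (1 + r / d) ≤ jDist D' (f x) (f y) := by
      unfold jDist
      rw [← hrdef, ← hddef, ← hdydef]
      have hrd0 : 0 ≤ r / d := div_nonneg hr0 hd0.le
      refine Real.log_le_log (by linarith) ?_
      exact add_le_add_right (div_le_div_of_nonneg_left hr0 hm0 (min_le_left _ _)) 1
    refine hstep.trans (hj.trans ?_)
    exact hmonoOn hj0 hq0 hjk
  refine ⟨part1, hqle.trans hlog2, by linarith⟩
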